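/- Let s ≥ 0. Then: (i) every facet of the adjoint polytope P^(s) is of the form F^(s) := {x ∈ P^(s) : d_F(x) = s} for some facet F of P; (ii) if P^(s) has dimension n and x ∈ P^(s), then d_{P^(s)}(x) = d_P(x) − s; moreover, if x lies in the interior of P^(s) and d_P(x) = d_F(x) for a facet F of P, then F^(s) is a facet of P^(s) and d_{P^(s)}(x) = d_{F^(s)}(x). -/

import Mathlib

open scoped BigOperators Pointwise

noncomputable section

/-- Pairing `⟨a, x⟩ = ∑ aⱼ xⱼ` of an integer linear functional with a real point. -/
def ipair {n : ℕ} (a : Fin n → ℤ) (x : Fin n → ℝ) : ℝ := ∑ j, (a j : ℝ) * x j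

/-- An integer vector is primitive if it is nonzero and not a nontrivial integer
multiple of another integer vector. -/
def IsPrimitive {n : ℕ} (a : Fin n → ℤ) : Prop :=
  a ≠ 0 ∧ ∀ (k : ℤ) (b : Fin n → ℤ), a = k • b → IsUnit k

/-- The set of integer (lattice) points of `ℝⁿ`. -/
def IntPts (n : ℕ) : Set (Fin n → ℝ) := Set.range (fun z : Fin n → ℤ => fun j => (z j : ℝ))

/-- The dimension of a subset of `ℝⁿ` (the dimension of its affine hull). -/
def setDim {n : ℕ} (S : Set (Fin n → ℝ)) : ℕ := Module.finrank ℝ (vectorSpan ℝ S)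

/-- An irredundant facet description `P = {x : A x ≥ b}` of an `n`-dimensional
rational polytope: the rows `aᵢ` of `A` are primitive integer vectors, the right hand
sides are rational, `P` is bounded and `n`-dimensional, every inequality defines a facet
(a face of dimension `n-1`), and no inequality is repeated. -/
structure PolyDesc (n m : ℕ) : Type where
  hm : 0 < m
  A : Fin m → Fin n → ℤ
  b : Fin m → ℚ
  prim : ∀ i, IsPrimitive (A i)
  bounded : Bornology.IsBounded {x : Fin n → ℝ | ∀ i, (b i : ℝ) ≤ ipair (A i) x}
  fulldim : setDim {x : Fin n → ℝ | ∀ i, (b i : ℝ) ≤ ipair (A i) x} = n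
  facet_dim : ∀ i, setDim {x : Fin n → ℝ |
      (∀ j, (b j : ℝ) ≤ ipair (A j) x) ∧ ipair (A i) x = (b i : ℝ)} + 1 = n
  irredundant : Function.Injective (fun i => (A i, b i))

namespace PolyDesc

variable {n m : ℕ} (D : PolyDesc n m)

/-- The polytope `P` itself. -/
def pts : Set (Fin n → ℝ) := {x | ∀ i, (D.b i : ℝ) ≤ ipair (D.A i) x}

/-- Lattice distance `d_{Fᵢ}(x) = ⟨aᵢ, x⟩ - bᵢ` from (the hyperplane spanned by)
the `i`-th facet. -/
def dF (i : Fin m) (x : Fin n → ℝ) : ℝ := ipair (D.A i) x - (D.b i : ℝ)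

/-- Lattice distance `d_P(x) = minᵢ d_{Fᵢ}(x)` from the boundary of `P`. -/
def dist (x : Fin n → ℝ) : ℝ :=
  Finset.univ.inf'
    (Finset.univ_nonempty_iff.mpr (Fin.pos_iff_nonempty.mp D.hm))
    (fun i => D.dF i x)

/-- The adjoint polytope `P⁽ˢ⁾ = {x : d_P(x) ≥ s}`. -/
def adj (s : ℝ) : Set (Fin n → ℝ) := {x | s ≤ D.dist x}

/-- The `i`-th facet `Fᵢ` of `P`. -/
def facet (i : Fin m) : Set (Fin n → ℝ) := {x ∈ D.pts | ipair (D.A i) x = (D.b i : ℝ)}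

/-- The set `{s > 0 : P⁽ˢ⁾ ≠ ∅}`, whose supremum is `μ(P)⁻¹`. -/
def qcdInvSet : Set ℝ := {s : ℝ | 0 < s ∧ (D.adj s).Nonempty}

/-- `μ(P)⁻¹ = sup {s > 0 : P⁽ˢ⁾ ≠ ∅}`. -/
def qcdInv : ℝ := sSup D.qcdInvSet

/-- The ℚ-codegree `μ(P) = (sup {s > 0 : P⁽ˢ⁾ ≠ ∅})⁻¹`. -/
def qcd : ℝ := D.qcdInv⁻¹

/-- The core `core(P) = P^{(1/μ(P))}`. -/
def core : Set (Fin n → ℝ) := D.adj D.qcdInv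

/-- The codegree `cd(P) = min {k ∈ ℕ, k ≥ 1 : int(kP) ∩ ℤⁿ ≠ ∅}`. -/
def codeg : ℕ := sInf {k : ℕ | 0 < k ∧
  ∃ z : Fin n → ℤ, (fun j => (z j : ℝ)) ∈ interior ((k : ℝ) • D.pts)}

end PolyDesc

/-- The face of `S` on which the linear functional `u` is maximized. -/
def argFace {n : ℕ} (S : Set (Fin n → ℝ)) (u : Fin n → ℝ) : Set (Fin n → ℝ) :=
  {x ∈ S | ∀ y ∈ S, ∑ j, u j * y j ≤ ∑ j, u j * x j}

/-- `S` and `T` have the same normal fan: two linear functionals lie in the same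
(relatively open) cone of the normal fan of `S`, i.e. are maximized on the same face
of `S`, iff the same holds for `T`. -/
def SameNormalFan {n : ℕ} (S T : Set (Fin n → ℝ)) : Prop :=
  ∀ u v : Fin n → ℝ, (argFace S u = argFace S v ↔ argFace T u = argFace T v)

/-- The normal fan of `S` refines the normal fan of `T`. -/
def RefinesNormalFan {n : ℕ} (S T : Set (Fin n → ℝ)) : Prop :=
  ∀ u v : Fin n → ℝ, argFace S u = argFace S v → argFace T u = argFace T v

namespace PolyDesc
variable {n m : ℕ} (D : PolyDesc n m)

/-- `{s > 0 : N(P⁽ˢ⁾) = N(P)}`, whose supremum is `τ(P)⁻¹`. -/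
def nefInvSet : Set ℝ := {s : ℝ | 0 < s ∧ SameNormalFan (D.adj s) D.pts}

/-- `τ(P)⁻¹ = sup {s > 0 : N(P⁽ˢ⁾) = N(P)}`. -/
def nefInv : ℝ := sSup D.nefInvSet

/-- The nef value `τ(P)`. -/
def nefVal : ℝ := D.nefInv⁻¹

/-- The set of inequalities active at `x`; the normal cone of the minimal face of `P`
containing `x` is generated by `{aᵢ : i ∈ active x}`, and all cones of the normal fan
of `P` arise in this way. -/
def active (x : Fin n → ℝ) : Set (Fin m) := {i | ipair (D.A i) x = (D.b i : ℝ)}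

/-- The normal cone at the vertex `v` is ℚ-Gorenstein of index `r`, witnessed by the
primitive lattice point `u = u_σ` with `⟨aᵢ, u⟩ = r` for all active `i`. -/
def VertexQG (v : Fin n → ℝ) (u : Fin n → ℤ) (r : ℤ) : Prop :=
  IsPrimitive u ∧ 0 < r ∧ ∀ i ∈ D.active v, (∑ j, D.A i j * u j) = r

/-- The normal fan of `P` is ℚ-Gorenstein: every maximal cone (normal cone of a
vertex, i.e. of an extreme point) is ℚ-Gorenstein. -/
def QGorenstein : Prop := ∀ v ∈ Set.extremePoints ℝ D.pts, ∃ u r, D.VertexQG v u r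

end PolyDesc

/-- The point `v(s) = v + (s/r_σ) • u_σ`. -/
def vmove {n : ℕ} (v : Fin n → ℝ) (s : ℝ) (u : Fin n → ℤ) (r : ℤ) : Fin n → ℝ :=
  v + (s / (r : ℝ)) • (fun j => ((u j : ℝ)))

/-- The height of a point `y` in the cone generated by `{aᵢ : i ∈ I}`:
`ht(y) = max {∑ λᵢ : λᵢ ≥ 0, ∑ λᵢ aᵢ = y}`. -/
def coneHeight {n m : ℕ} (D : PolyDesc n m) (I : Set (Fin m)) (y : Fin n → ℝ) : ℝ :=
  sSup {t : ℝ | ∃ c : Fin m → ℝ, (∀ i, 0 ≤ c i) ∧ (∀ i ∉ I, c i = 0) ∧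
    (y = ∑ i, c i • (fun j => ((D.A i j : ℝ)))) ∧ t = ∑ i, c i}

/-- `P` is α-canonical: for every cone `σ` of the normal fan of `P` (the normal cone
of the minimal face containing a point `x ∈ P`, generated by `{aᵢ : i ∈ active x}`),
every nonzero lattice point of `σ` has height at least `α`. -/
def AlphaCanonical {n m : ℕ} (D : PolyDesc n m) (α : ℝ) : Prop :=
  ∀ x ∈ D.pts, ∀ z : Fin n → ℤ, z ≠ 0 →
    (∃ c : Fin m → ℝ, (∀ i, 0 ≤ c i) ∧ (∀ i ∉ D.active x, c i = 0) ∧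
      ((fun j => ((z j : ℝ))) = ∑ i, c i • (fun j => ((D.A i j : ℝ))))) →
    α ≤ coneHeight D (D.active x) (fun j => ((z j : ℝ)))

/-- `P` is a lattice polytope: the convex hull of finitely many integer points. -/
def IsLatticePoly {n : ℕ} (P : Set (Fin n → ℝ)) : Prop :=
  ∃ V : Finset (Fin n → ℤ),
    P = convexHull ℝ ((fun z : Fin n → ℤ => fun j => ((z j : ℝ))) '' (V : Set (Fin n → ℤ)))

/-- The `i`-th standard basis vector of `ℝᵗ`. -/
def stdBasisVec (t : ℕ) (i : Fin t) : Fin t → ℝ := fun j => if j = i then 1 else 0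

/-- The marking vectors of a Cayley sum: `0, e₁, …, e_t ∈ ℝᵗ`. -/
def cayleyVec (t : ℕ) : Fin (t + 1) → (Fin t → ℝ) :=
  fun j => if h : (j : ℕ) = 0 then 0 else stdBasisVec t ⟨(j : ℕ) - 1, by have := j.isLt; omega⟩

/-- The Cayley sum `Q₀ * ⋯ * Q_t = conv((Q₀ × {0}) ∪ (Q₁ × {e₁}) ∪ ⋯ ∪ (Q_t × {e_t}))`. -/
def cayleySum {k t : ℕ} (Q : Fin (t + 1) → Set (Fin k → ℝ)) :
    Set ((Fin k → ℝ) × (Fin t → ℝ)) :=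
  convexHull ℝ (⋃ j, (Q j) ×ˢ ({cayleyVec t j} : Set (Fin t → ℝ)))

/-- `P ⊆ ℝⁿ` is a Cayley polytope `P₀ * ⋯ * P_t` of length `t+1` of lattice polytopes
`Pⱼ ⊆ ℝᵏ` with `k + t = n`: some affine lattice isomorphism `ℤⁿ ≅ ℤᵏ × ℤᵗ`
identifies `P` with such a Cayley sum. -/
def IsCayley {n : ℕ} (P : Set (Fin n → ℝ)) (k t : ℕ) : Prop :=
  k + t = n ∧
  ∃ Q : Fin (t + 1) → Finset (Fin k → ℤ), (∀ j, (Q j).Nonempty) ∧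
  ∃ f : (Fin n → ℝ) ≃ᵃ[ℝ] (Fin k → ℝ) × (Fin t → ℝ),
    f '' IntPts n = (IntPts k) ×ˢ (IntPts t) ∧
    f '' P = cayleySum (fun j =>
      convexHull ℝ ((fun z : Fin k → ℤ => fun i => ((z i : ℝ))) '' (Q j : Set (Fin k → ℤ))))

/-- The unimodular simplex `Δₙ = conv(0, e₁, …, eₙ)`. -/
def unimodSimplex (n : ℕ) : Set (Fin n → ℝ) :=
  convexHull ℝ (insert (0 : Fin n → ℝ) (Set.range (stdBasisVec n)))

/-- Two subsets of `ℝⁿ` are unimodularly equivalent: an affine lattice automorphism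
maps one onto the other. -/
def UnimodEquiv {n : ℕ} (P P' : Set (Fin n → ℝ)) : Prop :=
  ∃ f : (Fin n → ℝ) ≃ᵃ[ℝ] (Fin n → ℝ), f '' IntPts n = IntPts n ∧ f '' P = P'

/-- The codegree `cd(P) = min {k ∈ ℕ, k ≥ 1 : int(kP) ∩ ℤⁿ ≠ ∅}` of a polytope given
as a set. -/
def codegS {n : ℕ} (P : Set (Fin n → ℝ)) : ℕ :=
  sInf {k : ℕ | 0 < k ∧ ∃ z : Fin n → ℤ, (fun j => (z j : ℝ)) ∈ interior ((k : ℝ) • P)}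

/-- `P` has lattice width one: some nonzero integer linear functional has minimum `c`
and maximum `c + 1` on `P`. -/
def HasLatticeWidthOne {n : ℕ} (P : Set (Fin n → ℝ)) : Prop :=
  ∃ u : Fin n → ℤ, u ≠ 0 ∧ ∃ c : ℤ,
    (∀ x ∈ P, (c : ℝ) ≤ ipair u x ∧ ipair u x ≤ (c : ℝ) + 1) ∧
    (∃ x ∈ P, ipair u x = (c : ℝ)) ∧ (∃ x ∈ P, ipair u x = (c : ℝ) + 1)

/-- `P` is a lattice pyramid: for some primitive `u`, `P` is the convex hull of a base
lying in the lattice hyperplane `{⟨u, ·⟩ = c}` and an apex at lattice distance one from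
it (this is equivalent to being unimodularly equivalent to
`conv((Q × {0}) ∪ {(0, …, 0, 1)})` for an `(n-1)`-dimensional lattice polytope `Q`). -/
def IsLatticePyramid {n : ℕ} (P : Set (Fin n → ℝ)) : Prop :=
  ∃ u : Fin n → ℤ, IsPrimitive u ∧ ∃ c : ℤ, ∃ apex ∈ P,
    ipair u apex = (c : ℝ) + 1 ∧
    P = convexHull ℝ ({x ∈ P | ipair u x = (c : ℝ)} ∪ {apex})

/-- `F` is a facet of `S`: an exposed face of dimension `dim S - 1`. -/
def IsFacetOf {n : ℕ} (F S : Set (Fin n → ℝ)) : Prop :=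
  IsExposed ℝ S F ∧ F.Nonempty ∧ setDim F + 1 = setDim S

section Aux
variable {n : ℕ}

/-- `ipair a` as a linear map. -/
def ipairL (a : Fin n → ℤ) : (Fin n → ℝ) →ₗ[ℝ] ℝ where
  toFun x := ipair a x
  map_add' x y := by
    simp [ipair, mul_add, Finset.sum_add_distrib]
  map_smul' c x := by
    simp only [ipair, Pi.smul_apply, smul_eq_mul, RingHom.id_apply, Finset.mul_sum]
    exact Finset.sum_congr rfl fun j _ => by ring

@[simp] lemma ipairL_apply (a : Fin n → ℤ) (x : Fin n → ℝ) : ipairL a x = ipair a x := rfl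

/-- `ipair a` as a continuous linear map. -/
def ipairCLM (a : Fin n → ℤ) : (Fin n → ℝ) →L[ℝ] ℝ :=
  LinearMap.toContinuousLinearMap (ipairL a)

@[simp] lemma ipairCLM_apply (a : Fin n → ℤ) (x : Fin n → ℝ) : ipairCLM a x = ipair a x := rfl

lemma ipair_continuous (a : Fin n → ℤ) : Continuous (ipair a) := by
  have := (ipairCLM a).continuous
  exact this

lemma ipair_sub (a : Fin n → ℤ) (x y : Fin n → ℝ) :
    ipair a (x - y) = ipair a x - ipair a y := map_sub (ipairL a) x y

lemma ipair_add (a : Fin n → ℤ) (x y : Fin n → ℝ) :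
    ipair a (x + y) = ipair a x + ipair a y := map_add (ipairL a) x y

lemma ipair_smul (a : Fin n → ℤ) (c : ℝ) (x : Fin n → ℝ) :
    ipair a (c • x) = c * ipair a x := map_smul (ipairL a) c x

lemma ipair_sum (a : Fin n → ℤ) {ι : Type*} (t : Finset ι) (f : ι → Fin n → ℝ) :
    ipair a (∑ i ∈ t, f i) = ∑ i ∈ t, ipair a (f i) := map_sum (ipairL a) f t

end Aux

section Aux2
variable {n : ℕ}

lemma ipair_single (a : Fin n → ℤ) (j : Fin n) : ipair a (Pi.single j 1) = a j := by
  simp [ipair, Pi.single_apply, mul_ite, Finset.sum_ite_eq']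

lemma prim_exists_ne {a : Fin n → ℤ} (ha : IsPrimitive a) : ∃ j, a j ≠ 0 := by
  by_contra h
  push_neg at h
  exact ha.1 (funext fun j => h j)

lemma prim_eq_of_real_scale {a a' : Fin n → ℤ} (ha : IsPrimitive a) (ha' : IsPrimitive a')
    {lam : ℝ} (hlam : 0 < lam) (h : ∀ j, (a' j : ℝ) = lam * a j) : a' = a ∧ lam = 1 := by
  obtain ⟨j0, hj0⟩ := prim_exists_ne ha
  set x := a j0 with hxdef
  set y := a' j0 with hydef
  have hxy : ∀ j, a' j * x = y * a j := by
    intro j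
    have : ((a' j * x : ℤ) : ℝ) = ((y * a j : ℤ) : ℝ) := by
      push_cast
      rw [h j, h j0]
      ring
    exact_mod_cast this
  set g : ℤ := (Int.gcd x y : ℤ) with hgdef
  have hdx : g ∣ x := Int.gcd_dvd_left x y
  have hdy : g ∣ y := Int.gcd_dvd_right x y
  have hgpos : 0 < Int.gcd x y := Int.gcd_pos_iff.mpr (Or.inl hj0)
  have hg0 : g ≠ 0 := by
    simp only [hgdef]
    exact_mod_cast hgpos.ne'
  set q' : ℤ := x / g with hq'def
  set p' : ℤ := y / g with hp'def
  have hxq : x = g * q' := (Int.mul_ediv_cancel' hdx).symm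
  have hyp : y = g * p' := (Int.mul_ediv_cancel' hdy).symm
  have hcop : IsCoprime q' p' := by
    rw [Int.isCoprime_iff_gcd_eq_one]
    exact Int.gcd_div_gcd_div_gcd hgpos
  have hkey : ∀ j, q' * a' j = p' * a j := by
    intro j
    have := hxy j
    rw [hxq, hyp] at this
    have h2 : g * (q' * a' j) = g * (p' * a j) := by linear_combination this
    exact mul_left_cancel₀ hg0 h2
  have hq'dvd : ∀ j, q' ∣ a j := by
    intro j
    exact hcop.dvd_of_dvd_mul_left ⟨a' j, (hkey j).symm⟩
  have hp'dvd : ∀ j, p' ∣ a' j := by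
    intro j
    exact hcop.symm.dvd_of_dvd_mul_left ⟨a j, hkey j⟩
  have hq'unit : IsUnit q' := by
    refine ha.2 q' (fun j => a j / q') (funext fun j => ?_)
    show a j = q' * (a j / q')
    exact (Int.mul_ediv_cancel' (hq'dvd j)).symm
  have hp'unit : IsUnit p' := by
    refine ha'.2 p' (fun j => a' j / p') (funext fun j => ?_)
    show a' j = p' * (a' j / p')
    exact (Int.mul_ediv_cancel' (hp'dvd j)).symm
  have hlam2 : (p' : ℝ) = lam * q' := by
    have h1 : (y : ℝ) = lam * x := by
      rw [hxdef, hydef]; exact h j0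
    rw [hxq, hyp] at h1
    push_cast at h1
    have hgR : (g : ℝ) ≠ 0 := Int.cast_ne_zero.mpr hg0
    have h2 : (g : ℝ) * (p' : ℝ) = (g : ℝ) * (lam * (q' : ℝ)) := by linear_combination h1
    exact mul_left_cancel₀ hgR h2
  have hlam1 : lam = 1 := by
    rcases Int.isUnit_iff.mp hq'unit with hq1 | hq1 <;>
      rcases Int.isUnit_iff.mp hp'unit with hp1 | hp1 <;>
      rw [hq1, hp1] at hlam2 <;> push_cast at hlam2 <;> linarith
  subst hlam1
  refine ⟨funext fun j => ?_, rfl⟩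
  have := h j
  rw [one_mul] at this
  exact_mod_cast this

lemma finrank_ker_ipairL {a : Fin n → ℤ} (ha : ∃ j, a j ≠ 0) :
    Module.finrank ℝ (LinearMap.ker (ipairL a)) + 1 = n := by
  obtain ⟨j0, hj0⟩ := ha
  have hv : ipair a (Pi.single j0 1) ≠ 0 := by
    rw [ipair_single]
    exact_mod_cast hj0
  have hrange : LinearMap.range (ipairL a) = ⊤ := by
    rw [LinearMap.range_eq_top]
    intro r
    refine ⟨(r / ipair a (Pi.single j0 1)) • (Pi.single j0 1 : Fin n → ℝ), ?_⟩
    simp only [ipairL_apply, ipair_smul]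
    exact div_mul_cancel₀ r hv
  have := LinearMap.finrank_range_add_finrank_ker (ipairL a)
  rw [hrange] at this
  have h1 : Module.finrank ℝ (⊤ : Submodule ℝ ℝ) = 1 := by simp
  have h2 : Module.finrank ℝ (Fin n → ℝ) = n := by
    simp [Module.finrank_pi]
  omega

lemma vectorSpan_le_ker {G : Set (Fin n → ℝ)} {a : Fin n → ℤ} {β : ℝ}
    (hGa : ∀ y ∈ G, ipair a y = β) : vectorSpan ℝ G ≤ LinearMap.ker (ipairL a) := by
  rw [vectorSpan_def, Submodule.span_le]
  rintro v hv
  rw [Set.mem_vsub] at hv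
  obtain ⟨y, hy, z, hz, rfl⟩ := hv
  simp only [SetLike.mem_coe, LinearMap.mem_ker, vsub_eq_sub, ipairL_apply, ipair_sub,
    hGa y hy, hGa z hz, sub_self]

/-- Two facet-type inequalities carried by the same hyperplane coincide. -/
lemma hyperplane_match {a a' : Fin n → ℤ} (ha : IsPrimitive a) (ha' : IsPrimitive a')
    {β β' : ℝ} {G : Set (Fin n → ℝ)} (hGne : G.Nonempty)
    (hdim : Module.finrank ℝ (vectorSpan ℝ G) + 1 = n)
    (hGa : ∀ y ∈ G, ipair a y = β) (hGa' : ∀ y ∈ G, ipair a' y = β')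
    {q : Fin n → ℝ} (hq : β < ipair a q) (hq' : β' ≤ ipair a' q) :
    a' = a ∧ β' = β := by
  obtain ⟨g0, hg0⟩ := hGne
  have hWa : vectorSpan ℝ G = LinearMap.ker (ipairL a) := by
    refine Submodule.eq_of_le_of_finrank_eq (vectorSpan_le_ker hGa) ?_
    have := finrank_ker_ipairL (a := a) (prim_exists_ne ha)
    omega
  have hWa' : vectorSpan ℝ G = LinearMap.ker (ipairL a') := by
    refine Submodule.eq_of_le_of_finrank_eq (vectorSpan_le_ker hGa') ?_
    have := finrank_ker_ipairL (a := a') (prim_exists_ne ha')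
    omega
  set v : Fin n → ℝ := q - g0 with hvdef
  have hva : ipair a v = ipair a q - β := by rw [hvdef, ipair_sub, hGa g0 hg0]
  have hva' : ipair a' v = ipair a' q - β' := by rw [hvdef, ipair_sub, hGa' g0 hg0]
  have hvapos : 0 < ipair a v := by rw [hva]; linarith
  have hprop : ∀ x : Fin n → ℝ, ipair a' x = (ipair a' v / ipair a v) * ipair a x := by
    intro x
    have hmem : x - (ipair a x / ipair a v) • v ∈ LinearMap.ker (ipairL a) := by
      simp only [LinearMap.mem_ker, ipairL_apply, ipair_sub, ipair_smul]
      rw [div_mul_cancel₀ _ hvapos.ne', sub_self]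
    rw [← hWa, hWa'] at hmem
    simp only [LinearMap.mem_ker, ipairL_apply, ipair_sub, ipair_smul] at hmem
    have := sub_eq_zero.mp hmem
    rw [this]
    field_simp
  set lam := ipair a' v / ipair a v with hlamdef
  have hlampos : 0 < lam := by
    rcases lt_or_eq_of_le (div_nonneg (by linarith) hvapos.le : 0 ≤ lam) with h | h
    · exact h
    · exfalso
      apply ha'.1
      funext j
      have h2 := hprop (Pi.single j 1)
      rw [ipair_single, hlamdef, ← h, zero_mul] at h2
      have h3 : a' j = 0 := by exact_mod_cast h2
      simpa using h3
  have hj : ∀ j, (a' j : ℝ) = lam * a j := by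
    intro j
    have := hprop (Pi.single j 1)
    rwa [ipair_single, ipair_single] at this
  obtain ⟨haa, hlam1⟩ := prim_eq_of_real_scale ha ha' hlampos hj
  refine ⟨haa, ?_⟩
  rw [← hGa' g0 hg0, haa, hGa g0 hg0]

end Aux2

section Aux3
variable {n : ℕ}

lemma setDim_mono {S T : Set (Fin n → ℝ)} (h : S ⊆ T) : setDim S ≤ setDim T :=
  Submodule.finrank_mono (vectorSpan_mono ℝ h)

lemma setDim_empty : setDim (∅ : Set (Fin n → ℝ)) = 0 := by
  simp [setDim, vectorSpan_empty]

lemma setDim_le_of_forall_eq {S : Set (Fin n → ℝ)} {a : Fin n → ℤ} {β : ℝ}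
    (ha : ∃ j, a j ≠ 0) (h : ∀ y ∈ S, ipair a y = β) : setDim S + 1 ≤ n := by
  have h1 : setDim S ≤ Module.finrank ℝ (LinearMap.ker (ipairL a)) :=
    Submodule.finrank_mono (vectorSpan_le_ker h)
  have h2 := finrank_ker_ipairL ha
  omega

lemma exists_strict_of_setDim {S : Set (Fin n → ℝ)} (hdim : setDim S = n) (hn : 0 < n)
    {a : Fin n → ℤ} {β : ℝ} (ha : ∃ j, a j ≠ 0) (hval : ∀ y ∈ S, β ≤ ipair a y) :
    ∃ q ∈ S, β < ipair a q := by
  by_contra h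
  push_neg at h
  have heq : ∀ y ∈ S, ipair a y = β := fun y hy => le_antisymm (h y hy) (hval y hy)
  have := setDim_le_of_forall_eq ha heq
  omega

lemma isExposed_inter_hyperplane {S : Set (Fin n → ℝ)} {a : Fin n → ℤ} {β : ℝ}
    (hval : ∀ y ∈ S, β ≤ ipair a y) :
    IsExposed ℝ S {y ∈ S | ipair a y = β} := by
  rintro ⟨z, hzS, hzβ⟩
  refine ⟨-ipairCLM a, ?_⟩
  ext x
  simp only [Set.mem_setOf_eq, ContinuousLinearMap.neg_apply, ipairCLM_apply, neg_le_neg_iff]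
  constructor
  · rintro ⟨hxS, hxβ⟩
    exact ⟨hxS, fun y hy => by rw [hxβ]; exact hval y hy⟩
  · rintro ⟨hxS, hmax⟩
    exact ⟨hxS, le_antisymm (by simpa [hzβ] using hmax z hzS) (hval x hxS)⟩

namespace PolyDesc
variable {n m : ℕ} (E : PolyDesc n m)

lemma npos (D : PolyDesc n m) : 0 < n := by
  rcases Nat.eq_zero_or_pos n with h | h
  · exfalso
    obtain ⟨j, hj⟩ := prim_exists_ne (D.prim ⟨0, D.hm⟩)
    subst h
    exact absurd j.isLt (by omega)
  · exact h

lemma mem_pts {x : Fin n → ℝ} : x ∈ E.pts ↔ ∀ i, 0 ≤ E.dF i x := by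
  simp only [pts, Set.mem_setOf_eq, dF, sub_nonneg]

lemma dist_le (x : Fin n → ℝ) (i : Fin m) : E.dist x ≤ E.dF i x :=
  Finset.inf'_le _ (Finset.mem_univ i)

lemma le_dist {x : Fin n → ℝ} {c : ℝ} (h : ∀ i, c ≤ E.dF i x) : c ≤ E.dist x :=
  Finset.le_inf' _ _ fun i _ => h i

lemma exists_dist_eq (x : Fin n → ℝ) : ∃ i, E.dist x = E.dF i x := by
  obtain ⟨i, _, hi⟩ := Finset.exists_mem_eq_inf' _ (fun i => E.dF i x)
  exact ⟨i, hi⟩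

lemma mem_adj {s : ℝ} {x : Fin n → ℝ} : x ∈ E.adj s ↔ ∀ i, s ≤ E.dF i x := by
  constructor
  · intro h i
    exact le_trans h (E.dist_le x i)
  · intro h
    exact E.le_dist h

lemma adj_subset_pts {s : ℝ} (hs : 0 ≤ s) : E.adj s ⊆ E.pts := by
  intro x hx
  rw [E.mem_adj] at hx
  rw [E.mem_pts]
  exact fun i => le_trans hs (hx i)

lemma dF_affine_comb {ι : Type*} (t : Finset ι) (w : ι → ℝ) (hw : ∑ k ∈ t, w k = 1)
    (f : ι → Fin n → ℝ) (i : Fin m) :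
    E.dF i (∑ k ∈ t, w k • f k) = ∑ k ∈ t, w k * E.dF i (f k) := by
  simp only [dF, ipair_sum, ipair_smul, mul_sub]
  rw [Finset.sum_sub_distrib, ← Finset.sum_mul, hw, one_mul]

lemma dF_two_comb (t : ℝ) (x p : Fin n → ℝ) (i : Fin m) :
    E.dF i ((1 - t) • x + t • p) = (1 - t) * E.dF i x + t * E.dF i p := by
  simp only [dF, ipair_add, ipair_smul]
  ring

lemma pts_closed : IsClosed E.pts := by
  have : E.pts = ⋂ i, {x : Fin n → ℝ | (E.b i : ℝ) ≤ ipair (E.A i) x} := by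
    ext x; simp [pts, Set.mem_iInter]
  rw [this]
  exact isClosed_iInter fun i =>
    isClosed_le continuous_const (ipair_continuous (E.A i))

lemma isOpen_strict : IsOpen {x : Fin n → ℝ | ∀ i, 0 < E.dF i x} := by
  have : {x : Fin n → ℝ | ∀ i, 0 < E.dF i x} = ⋂ i, {x | 0 < E.dF i x} := by
    ext x; simp [Set.mem_iInter]
  rw [this]
  refine isOpen_iInter_of_finite fun i => ?_
  have : Continuous (E.dF i) := (ipair_continuous (E.A i)).sub continuous_const
  exact isOpen_lt continuous_const this

lemma strict_subset_interior : {x : Fin n → ℝ | ∀ i, 0 < E.dF i x} ⊆ interior E.pts := by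
  apply interior_maximal _ E.isOpen_strict
  intro x hx
  rw [E.mem_pts]
  exact fun i => (hx i).le

lemma exists_tight_of_boundary {x : Fin n → ℝ} (hx : x ∈ E.pts)
    (hxi : x ∉ interior E.pts) : ∃ i, E.dF i x = 0 := by
  by_contra h
  push_neg at h
  apply hxi
  apply E.strict_subset_interior
  intro i
  exact lt_of_le_of_ne (E.mem_pts.mp hx i) (Ne.symm (h i))

lemma ipair_self_pos {a : Fin n → ℤ} (ha : ∃ j, a j ≠ 0) :
    0 < ipair a (fun j => (a j : ℝ)) := by
  obtain ⟨j, hj⟩ := ha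
  refine Finset.sum_pos' (fun k _ => mul_self_nonneg _) ⟨j, Finset.mem_univ j, ?_⟩
  exact mul_self_pos.mpr (by exact_mod_cast hj)

lemma not_mem_interior_of_tight {x : Fin n → ℝ} {i : Fin m} (hx : E.dF i x = 0) :
    x ∉ interior E.pts := by
  intro hint
  set u : Fin n → ℝ := fun j => (E.A i j : ℝ) with hu
  have hupos : 0 < ipair (E.A i) u := ipair_self_pos (prim_exists_ne (E.prim i))
  obtain ⟨r, hr, hball⟩ := Metric.mem_nhds_iff.mp (mem_interior_iff_mem_nhds.mp hint)
  set ε : ℝ := r / (2 * (‖u‖ + 1)) with hεdef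
  have hε : 0 < ε := by positivity
  have hmem : x - ε • u ∈ Metric.ball x r := by
    rw [Metric.mem_ball, dist_eq_norm]
    have h1 : x - ε • u - x = -(ε • u) := by abel
    rw [h1, norm_neg, norm_smul, Real.norm_eq_abs, abs_of_pos hε]
    have h2 : ε * ‖u‖ ≤ ε * (‖u‖ + 1) := by nlinarith [norm_nonneg u]
    have h3 : ε * (‖u‖ + 1) = r / 2 := by
      rw [hεdef]
      field_simp
    have : (0:ℝ) < r := hr
    linarith
  have hp : x - ε • u ∈ E.pts := hball hmem
  have hdF : E.dF i (x - ε • u) = E.dF i x - ε * ipair (E.A i) u := by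
    simp only [dF, ipair_sub, ipair_smul]
    ring
  rw [hx, zero_sub] at hdF
  have := E.mem_pts.mp hp i
  rw [hdF] at this
  nlinarith

lemma interior_pos {x : Fin n → ℝ} (hx : x ∈ interior E.pts) :
    ∀ i, 0 < E.dF i x := by
  intro i
  have hmem : x ∈ E.pts := interior_subset hx
  rcases lt_or_eq_of_le (E.mem_pts.mp hmem i) with h | h
  · exact h
  · exact absurd hx (E.not_mem_interior_of_tight h.symm)

end PolyDesc
end Aux3

section PartOne
variable {n m : ℕ}

lemma clm_vanish_vectorSpan {G : Set (Fin n → ℝ)} {l : (Fin n → ℝ) →L[ℝ] ℝ} {c : ℝ}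
    (h : ∀ y ∈ G, l y = c) : ∀ v ∈ vectorSpan ℝ G, l v = 0 := by
  have hle : vectorSpan ℝ G ≤ LinearMap.ker (l : (Fin n → ℝ) →ₗ[ℝ] ℝ) := by
    rw [vectorSpan_def, Submodule.span_le]
    rintro v hv
    rw [Set.mem_vsub] at hv
    obtain ⟨y, hy, z, hz, rfl⟩ := hv
    simp only [SetLike.mem_coe, LinearMap.mem_ker, vsub_eq_sub, ContinuousLinearMap.coe_coe,
      map_sub, h y hy, h z hz, sub_self]
  intro v hv
  exact (LinearMap.mem_ker).mp (hle hv)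

theorem facet_struct (D : PolyDesc n m) {s : ℝ} (hs : 0 ≤ s) {G : Set (Fin n → ℝ)}
    (hG : IsFacetOf G (D.adj s)) :
    ∃ i : Fin m, G = {x ∈ D.adj s | D.dF i x = s} := by
  obtain ⟨hexp, hne, hdim⟩ := hG
  obtain ⟨l, hl⟩ := hexp hne
  obtain ⟨g0, hg0⟩ := hne
  have hGQ : G ⊆ D.adj s := by rw [hl]; exact fun x hx => hx.1
  have hGmax : ∀ x ∈ G, ∀ y ∈ D.adj s, l y ≤ l x := by
    intro x hx
    rw [hl] at hx
    exact hx.2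
  have hmemG : ∀ x, x ∈ D.adj s → (∀ y ∈ D.adj s, l y ≤ l x) → x ∈ G := by
    intro x h1 h2
    rw [hl]
    exact ⟨h1, h2⟩
  -- step 1
  have step1 : ∃ i, (∀ g ∈ G, D.dF i g = s) ∧ (∃ q ∈ D.adj s, s < D.dF i q) := by
    by_contra hcon
    push_neg at hcon
    have hgi : ∀ i : Fin m, ∃ gi, gi ∈ G ∧ (s < D.dF i gi ∨ ∀ q ∈ D.adj s, D.dF i q = s) := by
      intro i
      by_cases h : ∃ g ∈ G, s < D.dF i g
      · obtain ⟨g, hgG, hgl⟩ := h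
        exact ⟨g, hgG, Or.inl hgl⟩
      · push_neg at h
        have heq : ∀ g ∈ G, D.dF i g = s := fun g hgG =>
          le_antisymm (h g hgG) ((D.mem_adj.mp (hGQ hgG)) i)
        obtain ⟨q, hqQ, hql⟩ | halt := em (∃ q ∈ D.adj s, s < D.dF i q)
        · exact absurd hql (by
            have := hcon i heq q hqQ
            linarith)
        · push_neg at halt
          exact ⟨g0, hg0, Or.inr fun q hq =>
            le_antisymm (halt q hq) ((D.mem_adj.mp hq) i)⟩
    choose gfun hgmem hgalt using hgi
    have hmne : (0:ℝ) < m := by exact_mod_cast D.hm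
    have hw : ∑ _i : Fin m, (m : ℝ)⁻¹ = 1 := by
      rw [Finset.sum_const, Finset.card_univ, Fintype.card_fin, nsmul_eq_mul]
      field_simp
    set g : Fin n → ℝ := ∑ i, (m : ℝ)⁻¹ • gfun i with hgdef
    have hdFg : ∀ i', D.dF i' g = ∑ i, (m : ℝ)⁻¹ * D.dF i' (gfun i) := fun i' =>
      D.dF_affine_comb Finset.univ _ hw gfun i'
    have hgQ : g ∈ D.adj s := by
      rw [D.mem_adj]
      intro i'
      rw [hdFg i']
      calc s = ∑ _i : Fin m, (m : ℝ)⁻¹ * s := by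
            rw [← Finset.sum_mul, hw, one_mul]
        _ ≤ _ := Finset.sum_le_sum fun i _ => by
            have := (D.mem_adj.mp (hGQ (hgmem i))) i'
            have h0 : (0:ℝ) < (m : ℝ)⁻¹ := by positivity
            nlinarith
    have hlg : l g = l g0 := by
      have hval : ∀ i, l (gfun i) = l g0 := fun i =>
        le_antisymm (hGmax g0 hg0 (gfun i) (hGQ (hgmem i)))
          (hGmax (gfun i) (hgmem i) g0 (hGQ hg0))
      rw [hgdef, map_sum]
      simp only [map_smul, smul_eq_mul, hval]
      rw [← Finset.sum_mul, hw, one_mul]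
    have hgG : g ∈ G := hmemG g hgQ fun y hy => by
      rw [hlg]; exact hGmax g0 hg0 y hy
    have hkey : ∀ i, s < D.dF i g ∨ ∀ q ∈ D.adj s, D.dF i q = s := by
      intro i
      rcases hgalt i with h | h
      · left
        rw [hdFg i]
        have hlt : (m : ℝ)⁻¹ * s < (m : ℝ)⁻¹ * D.dF i (gfun i) := by
          have h0 : (0:ℝ) < (m : ℝ)⁻¹ := by positivity
          nlinarith
        calc s = ∑ _i : Fin m, (m : ℝ)⁻¹ * s := by
              rw [← Finset.sum_mul, hw, one_mul]
          _ < _ := by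
              refine Finset.sum_lt_sum (fun k _ => ?_) ⟨i, Finset.mem_univ i, hlt⟩
              have := (D.mem_adj.mp (hGQ (hgmem k))) i
              have h0 : (0:ℝ) < (m : ℝ)⁻¹ := by positivity
              nlinarith
      · right; exact h
    -- now show D.adj s ⊆ G, contradiction with dimension
    have hQG : D.adj s ⊆ G := by
      intro y hy
      set εf : Fin m → ℝ := fun i =>
        if s < D.dF i g then (D.dF i g - s) / (1 + |D.dF i g - D.dF i y|) else 1 with hεf
      have hεfpos : ∀ i, 0 < εf i := by
        intro i
        rw [hεf]
        dsimp only
        split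
        · next h => exact div_pos (by linarith) (by positivity)
        · exact one_pos
      have hune : (Finset.univ : Finset (Fin m)).Nonempty :=
        Finset.univ_nonempty_iff.mpr (Fin.pos_iff_nonempty.mp D.hm)
      set ε : ℝ := Finset.univ.inf' hune εf with hεdef
      have hε : 0 < ε := by
        rw [hεdef, Finset.lt_inf'_iff]
        exact fun i _ => hεfpos i
      set z : Fin n → ℝ := (1 - (-ε)) • g + (-ε) • y with hzdef
      have hdFz : ∀ i, D.dF i z = D.dF i g + ε * (D.dF i g - D.dF i y) := by
        intro i
        rw [hzdef, D.dF_two_comb]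
        ring
      have hzQ : z ∈ D.adj s := by
        rw [D.mem_adj]
        intro i
        rcases hkey i with h | h
        · have hεle : ε ≤ εf i := Finset.inf'_le _ (Finset.mem_univ i)
          rw [hεf] at hεle
          dsimp only at hεle
          rw [if_pos h] at hεle
          set Δ : ℝ := D.dF i g - D.dF i y with hΔ
          have habs : 0 ≤ |Δ| := abs_nonneg Δ
          have h2 : ε * (1 + |Δ|) ≤ D.dF i g - s :=
            (le_div_iff₀ (by positivity)).mp hεle
          have h3 : ε * |Δ| ≤ D.dF i g - s := by nlinarith
          have h4 : -(ε * |Δ|) ≤ ε * Δ := by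
            have := mul_le_mul_of_nonneg_left (neg_abs_le Δ) hε.le
            simpa [mul_neg] using this
          rw [hdFz i, ← hΔ]
          linarith
        · rw [hdFz i, h g hgQ, h y hy]
          simp
      have hlz : l z = (1 + ε) * l g - ε * l y := by
        rw [hzdef]
        simp only [map_add, map_smul, smul_eq_mul]
        ring
      have := hGmax g hgG z hzQ
      rw [hlz] at this
      have hly : l g ≤ l y := by nlinarith
      refine hmemG y hy fun w hw => ?_
      calc l w ≤ l g := hGmax g hgG w hw
        _ ≤ l y := hly
    have hGeq : G = D.adj s := Set.Subset.antisymm hGQ hQG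
    rw [← hGeq] at hdim
    omega
  obtain ⟨i, hGi, q, hqQ, hq⟩ := step1
  refine ⟨i, ?_⟩
  set F : Set (Fin n → ℝ) := {y ∈ D.adj s | D.dF i y = s} with hF
  have hGF : G ⊆ F := fun x hx => ⟨hGQ hx, hGi x hx⟩
  have hFQ : F ⊆ D.adj s := fun x hx => hx.1
  -- dimension of F
  have hFker : vectorSpan ℝ F ≤ LinearMap.ker (ipairL (D.A i)) := by
    refine vectorSpan_le_ker (β := (D.b i : ℝ) + s) ?_
    intro y hy
    have := hy.2
    rw [PolyDesc.dF] at this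
    linarith
  have hsub : vectorSpan ℝ F ≤ vectorSpan ℝ (D.adj s) ⊓ LinearMap.ker (ipairL (D.A i)) :=
    le_inf (vectorSpan_mono ℝ hFQ) hFker
  have hvmem : q - g0 ∈ vectorSpan ℝ (D.adj s) := by
    have := vsub_mem_vectorSpan ℝ hqQ (hGQ hg0)
    simpa [vsub_eq_sub] using this
  have hvnker : ipairL (D.A i) (q - g0) ≠ 0 := by
    have h1 : D.dF i g0 = s := hGi g0 hg0
    simp only [ipairL_apply, ipair_sub]
    rw [PolyDesc.dF] at h1 hq
    intro hcon
    rw [sub_eq_zero] at hcon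
    rw [hcon] at hq
    linarith
  have hlt : vectorSpan ℝ (D.adj s) ⊓ LinearMap.ker (ipairL (D.A i)) < vectorSpan ℝ (D.adj s) := by
    refine lt_of_le_of_ne inf_le_left fun hcon => ?_
    have : q - g0 ∈ vectorSpan ℝ (D.adj s) ⊓ LinearMap.ker (ipairL (D.A i)) := by
      rw [hcon]; exact hvmem
    exact hvnker (this.2)
  have hdimF : setDim F < setDim (D.adj s) :=
    lt_of_le_of_lt (Submodule.finrank_mono hsub) (Submodule.finrank_lt_finrank_of_lt hlt)
  have hdimGF : setDim G = setDim F := by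
    have h1 : setDim G ≤ setDim F := setDim_mono hGF
    omega
  have hspan : vectorSpan ℝ G = vectorSpan ℝ F :=
    Submodule.eq_of_le_of_finrank_eq (vectorSpan_mono ℝ hGF) hdimGF
  refine Set.Subset.antisymm hGF ?_
  intro y hy
  have hvF : y - g0 ∈ vectorSpan ℝ F := by
    have := vsub_mem_vectorSpan ℝ hy (hGF hg0)
    simpa [vsub_eq_sub] using this
  rw [← hspan] at hvF
  have hlv : l (y - g0) = 0 :=
    clm_vanish_vectorSpan (c := l g0)
      (fun w hw => le_antisymm (hGmax g0 hg0 w (hGQ hw)) (hGmax w hw g0 (hGQ hg0))) _ hvF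
  rw [map_sub, sub_eq_zero] at hlv
  refine hmemG y (hFQ hy) fun w hw => ?_
  rw [hlv]
  exact hGmax g0 hg0 w hw
end PartOne

section LemmaR
variable {n m : ℕ}

lemma prim_fin_one (a : Fin 1 → ℤ) (ha : IsPrimitive a) : a 0 = 1 ∨ a 0 = -1 := by
  have h : a = a 0 • (fun _ => (1 : ℤ)) := funext fun j => by
    have hj : j = 0 := Subsingleton.elim j 0
    subst hj
    simp
  exact Int.isUnit_iff.mp (ha.2 _ _ h)

lemma ipair_fin_one (a : Fin 1 → ℤ) (x : Fin 1 → ℝ) : ipair a x = (a 0 : ℝ) * x 0 := by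
  simp [ipair]

/-- Every inequality of a description is, up to increasing the right hand side,
an inequality with nonempty tight set. -/
lemma PolyDesc.exists_shift (E : PolyDesc n m) (i : Fin m) :
    ∃ i1 : Fin m, ∃ v : ℝ, 0 ≤ v ∧
      ({y ∈ E.pts | ipair (E.A i1) y = (E.b i1 : ℝ)}).Nonempty ∧
      E.A i1 = E.A i ∧ (E.b i1 : ℝ) = (E.b i : ℝ) + v := by
  by_cases hne : ({y ∈ E.pts | ipair (E.A i) y = (E.b i : ℝ)}).Nonempty
  · exact ⟨i, 0, le_refl 0, hne, rfl, by ring⟩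
  -- empty tight set forces n = 1
  have hn1 : n = 1 := by
    rw [Set.not_nonempty_iff_eq_empty] at hne
    have := E.facet_dim i
    rw [show {x : Fin n → ℝ | (∀ j, (E.b j : ℝ) ≤ ipair (E.A j) x) ∧
        ipair (E.A i) x = (E.b i : ℝ)} = {y ∈ E.pts | ipair (E.A i) y = (E.b i : ℝ)} from rfl,
      hne, setDim_empty] at this
    omega
  have hptsne : E.pts.Nonempty := by
    rcases Set.eq_empty_or_nonempty E.pts with h | h
    · exfalso
      have := E.fulldim
      rw [show {x : Fin n → ℝ | ∀ i, (E.b i : ℝ) ≤ ipair (E.A i) x} = E.pts from rfl, h,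
        setDim_empty] at this
      omega
    · exact h
  have hcomp : IsCompact E.pts := Metric.isCompact_of_isClosed_isBounded E.pts_closed E.bounded
  obtain ⟨y0, hy0, hmin⟩ := hcomp.exists_isMinOn hptsne
    ((ipair_continuous (E.A i)).sub continuous_const).continuousOn
  have hminle : ∀ y ∈ E.pts, E.dF i y0 ≤ E.dF i y := fun y hy => hmin hy
  set v : ℝ := E.dF i y0 with hv
  have hv0 : 0 ≤ v := E.mem_pts.mp hy0 i
  have hvpos : 0 < v := by
    rcases lt_or_eq_of_le hv0 with h | h
    · exact h
    · exfalso
      apply hne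
      refine ⟨y0, hy0, ?_⟩
      have : E.dF i y0 = 0 := h.symm
      rw [PolyDesc.dF] at this
      linarith
  -- there is a tight constraint at y0
  have hex : ∃ k, E.dF k y0 = 0 := by
    by_contra h
    push_neg at h
    have hpos : ∀ k, 0 < E.dF k y0 := fun k =>
      lt_of_le_of_ne (E.mem_pts.mp hy0 k) (Ne.symm (h k))
    set u : Fin n → ℝ := fun j => (E.A i j : ℝ) with hu
    set δf : Fin m → ℝ := fun k => E.dF k y0 / (1 + |ipair (E.A k) u|) with hδf
    have hune : (Finset.univ : Finset (Fin m)).Nonempty :=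
      Finset.univ_nonempty_iff.mpr (Fin.pos_iff_nonempty.mp E.hm)
    set δ : ℝ := Finset.univ.inf' hune δf with hδdef
    have hδ : 0 < δ := by
      rw [hδdef, Finset.lt_inf'_iff]
      intro k _
      rw [hδf]
      exact div_pos (hpos k) (by positivity)
    have hy1 : y0 - δ • u ∈ E.pts := by
      rw [E.mem_pts]
      intro k
      have hδle : δ ≤ δf k := Finset.inf'_le _ (Finset.mem_univ k)
      rw [hδf] at hδle
      dsimp only at hδle
      have h2 : δ * (1 + |ipair (E.A k) u|) ≤ E.dF k y0 :=
        (le_div_iff₀ (by positivity)).mp hδle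
      have h3 : δ * ipair (E.A k) u ≤ δ * |ipair (E.A k) u| :=
        mul_le_mul_of_nonneg_left (le_abs_self _) hδ.le
      have h4 : E.dF k (y0 - δ • u) = E.dF k y0 - δ * ipair (E.A k) u := by
        simp only [PolyDesc.dF, ipair_sub, ipair_smul]
        ring
      have := abs_nonneg (ipair (E.A k) u)
      rw [h4]
      linarith
    have hlt : E.dF i (y0 - δ • u) < E.dF i y0 := by
      have h4 : E.dF i (y0 - δ • u) = E.dF i y0 - δ * ipair (E.A i) u := by
        simp only [PolyDesc.dF, ipair_sub, ipair_smul]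
        ring
      rw [h4]
      have := ipair_self_pos (prim_exists_ne (E.prim i))
      rw [← hu] at this
      nlinarith
    exact absurd (hminle _ hy1) (not_le.mpr hlt)
  obtain ⟨k1, hk1⟩ := hex
  subst hn1
  have htight : ipair (E.A k1) y0 = (E.b k1 : ℝ) := by
    rw [PolyDesc.dF] at hk1
    linarith
  have hcase : E.A k1 = E.A i ∨ (∀ y : Fin 1 → ℝ, ipair (E.A k1) y = -ipair (E.A i) y) := by
    rcases prim_fin_one (E.A k1) (E.prim k1) with hs1 | hs1 <;>
      rcases prim_fin_one (E.A i) (E.prim i) with hs2 | hs2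
    · left; funext j; have hj : j = 0 := Subsingleton.elim j 0; subst hj; rw [hs1, hs2]
    · right; intro y; rw [ipair_fin_one, ipair_fin_one, hs1, hs2]; push_cast; ring
    · right; intro y; rw [ipair_fin_one, ipair_fin_one, hs1, hs2]; push_cast; ring
    · left; funext j; have hj : j = 0 := Subsingleton.elim j 0; subst hj; rw [hs1, hs2]
  rcases hcase with haa | hopp
  · refine ⟨k1, v, hv0, ⟨y0, hy0, htight⟩, haa, ?_⟩
    have h1 : ipair (E.A i) y0 = (E.b i : ℝ) + v := by
      rw [hv, PolyDesc.dF]; ring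
    rw [← htight, haa, h1]
  · -- A k1 = - A i : the linear functional is constant on pts, contradiction
    exfalso
    have hconst : ∀ y ∈ E.pts, ipair (E.A i) y = ipair (E.A i) y0 := by
      intro y hy
      have hv' : v = ipair (E.A i) y0 - (E.b i : ℝ) := by rw [hv, PolyDesc.dF]
      have hle : ipair (E.A i) y0 ≤ ipair (E.A i) y := by
        have := hminle y hy
        simp only [PolyDesc.dF] at this
        linarith
      have hge : ipair (E.A i) y ≤ ipair (E.A i) y0 := by
        have hk := E.mem_pts.mp hy k1
        rw [PolyDesc.dF] at hk
        rw [hopp] at hk htight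
        linarith
      linarith
    have := setDim_le_of_forall_eq (prim_exists_ne (E.prim i)) hconst
    have hfd := E.fulldim
    rw [show {x : Fin 1 → ℝ | ∀ i, (E.b i : ℝ) ≤ ipair (E.A i) x} = E.pts from rfl] at hfd
    omega

/-- A point in the relative interior of the `i`-th facet: tight only at `i`. -/
lemma PolyDesc.exists_relint (D : PolyDesc n m) (i : Fin m)
    (hne : ({y ∈ D.pts | ipair (D.A i) y = (D.b i : ℝ)}).Nonempty) :
    ∃ p ∈ D.pts, D.dF i p = 0 ∧ ∀ j, j ≠ i → 0 < D.dF j p := by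
  obtain ⟨f0, hf0⟩ := hne
  set F : Set (Fin n → ℝ) := {y ∈ D.pts | ipair (D.A i) y = (D.b i : ℝ)} with hF
  have hdimF : setDim F + 1 = n := D.facet_dim i
  have hquot : ∀ j, j ≠ i → ∃ f, f ∈ F ∧ 0 < D.dF j f := by
    intro j hj
    by_contra h
    push_neg at h
    have heqj : ∀ f ∈ F, ipair (D.A j) f = (D.b j : ℝ) := by
      intro f hf
      have h1 := h f hf
      have h2 := D.mem_pts.mp hf.1 j
      rw [PolyDesc.dF] at h1 h2
      linarith
    have heqi : ∀ f ∈ F, ipair (D.A i) f = (D.b i : ℝ) := fun f hf => hf.2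
    obtain ⟨q, hq, hqs⟩ := exists_strict_of_setDim D.fulldim (D.npos)
      (prim_exists_ne (D.prim i)) (fun y hy => hy i)
    have hqv : (D.b j : ℝ) ≤ ipair (D.A j) q := hq j
    obtain ⟨haa, hbb⟩ := hyperplane_match (D.prim i) (D.prim j) ⟨f0, hf0⟩
      hdimF heqi heqj hqs hqv
    have hbb' : D.b j = D.b i := by exact_mod_cast hbb
    exact hj (D.irredundant (show (fun i => (D.A i, D.b i)) j = (fun i => (D.A i, D.b i)) i by
      simp only [Prod.mk.injEq]
      exact ⟨haa, hbb'⟩))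
  have hsel : ∀ j : Fin m, ∃ f, f ∈ F ∧ (j ≠ i → 0 < D.dF j f) := by
    intro j
    by_cases h : j = i
    · exact ⟨f0, hf0, fun c => absurd h c⟩
    · obtain ⟨f, hf, hfp⟩ := hquot j h
      exact ⟨f, hf, fun _ => hfp⟩
  choose ffun hffF hffpos using hsel
  have hmne : (0:ℝ) < m := by exact_mod_cast D.hm
  have hw : ∑ _k : Fin m, (m : ℝ)⁻¹ = 1 := by
    rw [Finset.sum_const, Finset.card_univ, Fintype.card_fin, nsmul_eq_mul]
    field_simp
  set p : Fin n → ℝ := ∑ k, (m : ℝ)⁻¹ • ffun k with hp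
  have hdFp : ∀ j, D.dF j p = ∑ k, (m : ℝ)⁻¹ * D.dF j (ffun k) := fun j =>
    D.dF_affine_comb Finset.univ _ hw ffun j
  have hinv : (0:ℝ) < (m : ℝ)⁻¹ := by positivity
  have hppts : p ∈ D.pts := by
    rw [D.mem_pts]
    intro j
    rw [hdFp j]
    refine Finset.sum_nonneg fun k _ => ?_
    have := D.mem_pts.mp (hffF k).1 j
    positivity
  refine ⟨p, hppts, ?_, ?_⟩
  · rw [hdFp i]
    refine Finset.sum_eq_zero fun k _ => ?_
    have : D.dF i (ffun k) = 0 := by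
      have := (hffF k).2
      rw [PolyDesc.dF, this]
      ring
    rw [this, mul_zero]
  · intro j hj
    rw [hdFp j]
    refine Finset.sum_pos' (fun k _ => ?_) ⟨j, Finset.mem_univ j, ?_⟩
    · have := D.mem_pts.mp (hffF k).1 j
      positivity
    · exact mul_pos hinv (hffpos j hj)

end LemmaR

section PartTwo
variable {n m : ℕ}

lemma not_mem_interior_general {S : Set (Fin n → ℝ)} {a : Fin n → ℤ} {β : ℝ}
    (ha : ∃ j, a j ≠ 0) (hval : ∀ y ∈ S, β ≤ ipair a y) {x : Fin n → ℝ}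
    (hx : ipair a x = β) : x ∉ interior S := by
  intro hint
  set u : Fin n → ℝ := fun j => (a j : ℝ) with hu
  have hupos : 0 < ipair a u := PolyDesc.ipair_self_pos ha
  obtain ⟨r, hr, hball⟩ := Metric.mem_nhds_iff.mp (mem_interior_iff_mem_nhds.mp hint)
  set ε : ℝ := r / (2 * (‖u‖ + 1)) with hεdef
  have hε : 0 < ε := by positivity
  have hmem : x - ε • u ∈ Metric.ball x r := by
    rw [Metric.mem_ball, dist_eq_norm]
    have h1 : x - ε • u - x = -(ε • u) := by abel
    rw [h1, norm_neg, norm_smul, Real.norm_eq_abs, abs_of_pos hε]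
    have h2 : ε * ‖u‖ ≤ ε * (‖u‖ + 1) := by nlinarith [norm_nonneg u]
    have h3 : ε * (‖u‖ + 1) = r / 2 := by
      rw [hεdef]
      field_simp
    linarith
  have hS : x - ε • u ∈ S := hball hmem
  have := hval _ hS
  rw [ipair_sub, ipair_smul, hx] at this
  nlinarith

lemma match_constraint (D : PolyDesc n m) {s : ℝ} (hs : 0 ≤ s)
    (hQ : setDim (D.adj s) = n) {m' : ℕ} (D' : PolyDesc n m') (hD' : D'.pts = D.adj s)
    (k : Fin m') (hne : ({y ∈ D'.pts | ipair (D'.A k) y = (D'.b k : ℝ)}).Nonempty) :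
    ∃ j : Fin m, D'.A k = D.A j ∧ (D'.b k : ℝ) = (D.b j : ℝ) + s := by
  set Gk : Set (Fin n → ℝ) := {y ∈ D'.pts | ipair (D'.A k) y = (D'.b k : ℝ)} with hGk
  have hdim : setDim Gk + 1 = n := D'.facet_dim k
  have hval : ∀ y ∈ D.adj s, (D'.b k : ℝ) ≤ ipair (D'.A k) y := by
    intro y hy
    rw [← hD'] at hy
    exact hy k
  have hGk2 : Gk = {y ∈ D.adj s | ipair (D'.A k) y = (D'.b k : ℝ)} := by rw [hGk, hD']
  have hfacet : IsFacetOf Gk (D.adj s) := by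
    refine ⟨?_, hne, by rw [hQ]; exact hdim⟩
    rw [hGk2]
    exact isExposed_inter_hyperplane hval
  obtain ⟨j, hGj⟩ := facet_struct D hs hfacet
  have heqj : ∀ y ∈ Gk, ipair (D.A j) y = (D.b j : ℝ) + s := by
    intro y hy
    rw [hGj] at hy
    have := hy.2
    rw [PolyDesc.dF] at this
    linarith
  have heqk : ∀ y ∈ Gk, ipair (D'.A k) y = (D'.b k : ℝ) := fun y hy => hy.2
  have hvalj : ∀ y ∈ D.adj s, (D.b j : ℝ) + s ≤ ipair (D.A j) y := by
    intro y hy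
    have := (D.mem_adj.mp hy) j
    rw [PolyDesc.dF] at this
    linarith
  obtain ⟨q, hqQ, hq⟩ := exists_strict_of_setDim hQ D.npos (prim_exists_ne (D.prim j)) hvalj
  have hq' : (D'.b k : ℝ) ≤ ipair (D'.A k) q := hval q hqQ
  exact ⟨j, hyperplane_match (D.prim j) (D'.prim k) hne hdim heqj heqk hq hq'⟩

lemma main_two (D : PolyDesc n m) {s : ℝ} (hs : 0 ≤ s)
    (hQ : setDim (D.adj s) = n) {m' : ℕ} (D' : PolyDesc n m') (hD' : D'.pts = D.adj s)
    {x : Fin n → ℝ} (hx : x ∈ D.adj s) {i0 : Fin m} (hmin : D.dist x = D.dF i0 x)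
    (hfne : ({y ∈ D.pts | ipair (D.A i0) y = (D.b i0 : ℝ)}).Nonempty) :
    ∃ k : Fin m', D'.dF k x ≤ D.dist x - s ∧
      (s < D.dist x → (D'.A k = D.A i0 ∧ (D'.b k : ℝ) = (D.b i0 : ℝ) + s) ∧
        ∃ z ∈ D.adj s, D.dF i0 z = s) := by
  have hxP : x ∈ D'.pts := by rw [hD']; exact hx
  have hcge : s ≤ D.dist x := hx
  obtain ⟨p, hpP, hp0, hppos⟩ := D.exists_relint i0 hfne
  rcases eq_or_lt_of_le hcge with hceq | hclt
  · -- D.dist x = s : x is itself on the boundary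
    have hxi0 : ipair (D.A i0) x = (D.b i0 : ℝ) + s := by
      have := hmin
      rw [PolyDesc.dF] at this
      rw [← hceq] at this
      linarith
    have hnint : x ∉ interior D'.pts := by
      refine not_mem_interior_general (prim_exists_ne (D.prim i0)) ?_ hxi0
      intro y hy
      rw [hD'] at hy
      have := (D.mem_adj.mp hy) i0
      rw [PolyDesc.dF] at this
      linarith
    obtain ⟨k, hk⟩ := D'.exists_tight_of_boundary hxP hnint
    refine ⟨k, by rw [hk, ← hceq]; linarith, fun hcon => absurd hcon (by rw [← hceq]; exact lt_irrefl s)⟩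
  · -- s < D.dist x
    set c : ℝ := D.dist x - s with hc
    have hcpos : 0 < c := by rw [hc]; linarith
    have hsc : 0 < s + c := by linarith
    set t : ℝ := c / (s + c) with ht
    have ht0 : 0 < t := div_pos hcpos hsc
    have ht1 : t ≤ 1 := by
      rw [ht, div_le_one hsc]
      linarith
    have hkey1 : (1 - t) * (s + c) = s := by
      rw [ht]
      field_simp
      ring
    set z : Fin n → ℝ := (1 - t) • x + t • p with hz
    have hdFz : ∀ j, D.dF j z = (1 - t) * D.dF j x + t * D.dF j p := fun j =>
      D.dF_two_comb t x p j
    have hdistx : ∀ j, s + c ≤ D.dF j x := by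
      intro j
      have := D.dist_le x j
      rw [hc]
      linarith
    have hzQ : z ∈ D.adj s := by
      rw [D.mem_adj]
      intro j
      rw [hdFz j]
      have h1 := hdistx j
      have h2 := D.mem_pts.mp hpP j
      nlinarith
    have hzi0 : D.dF i0 z = s := by
      rw [hdFz i0, hp0, ← hmin]
      have : D.dist x = s + c := by rw [hc]; ring
      rw [this]
      linarith [hkey1]
    have hzi0' : ipair (D.A i0) z = (D.b i0 : ℝ) + s := by
      rw [PolyDesc.dF] at hzi0
      linarith
    have hznint : z ∉ interior D'.pts := by
      refine not_mem_interior_general (prim_exists_ne (D.prim i0)) ?_ hzi0'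
      intro y hy
      rw [hD'] at hy
      have := (D.mem_adj.mp hy) i0
      rw [PolyDesc.dF] at this
      linarith
    have hzP : z ∈ D'.pts := by rw [hD']; exact hzQ
    obtain ⟨k, hk⟩ := D'.exists_tight_of_boundary hzP hznint
    have hkne : ({y ∈ D'.pts | ipair (D'.A k) y = (D'.b k : ℝ)}).Nonempty := by
      refine ⟨z, hzP, ?_⟩
      rw [PolyDesc.dF] at hk
      linarith
    obtain ⟨j1, hAj1, hbj1⟩ := match_constraint D hs hQ D' hD' k hkne
    have hdFpt : ∀ y, D'.dF k y = D.dF j1 y - s := by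
      intro y
      rw [PolyDesc.dF, PolyDesc.dF, hAj1, hbj1]
      ring
    have hj1z : D.dF j1 z = s := by
      have := hdFpt z
      rw [hk] at this
      linarith
    -- conclude j1 = i0
    have hj1p : D.dF j1 p = 0 := by
      have hexp := hdFz j1
      rw [hj1z] at hexp
      have h1 := hdistx j1
      have h2 := D.mem_pts.mp hpP j1
      nlinarith
    have hj1i0 : j1 = i0 := by
      by_contra hne2
      exact absurd hj1p (ne_of_gt (hppos j1 hne2))
    subst hj1i0
    refine ⟨k, ?_, fun _ => ⟨⟨hAj1, hbj1⟩, z, hzQ, hzi0⟩⟩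
    rw [hdFpt x, ← hmin, hc]

end PartTwo


/-- Let `s ≥ 0`. (i) Every facet of `P⁽ˢ⁾` is of the form
`F⁽ˢ⁾ = {x ∈ P⁽ˢ⁾ : d_F(x) = s}` for some facet `F = Fᵢ` of `P`.
(ii) If `P⁽ˢ⁾` has dimension `n` and `x ∈ P⁽ˢ⁾`, then `d_{P⁽ˢ⁾}(x) = d_P(x) - s`
(where `d_{P⁽ˢ⁾}` is computed from any irredundant facet description `D'` of `P⁽ˢ⁾`);
moreover, if `x ∈ int P⁽ˢ⁾` and `d_P(x) = d_{Fᵢ}(x)` for a facet `Fᵢ` of `P`, then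
`Fᵢ⁽ˢ⁾` is a facet of `P⁽ˢ⁾` and `d_{P⁽ˢ⁾}(x) = d_{Fᵢ⁽ˢ⁾}(x) = d_{Fᵢ}(x) - s`. -/
theorem statement0 {n m : ℕ} (D : PolyDesc n m) (s : ℝ) (hs : 0 ≤ s) :
    (∀ G : Set (Fin n → ℝ), IsFacetOf G (D.adj s) →
      ∃ i : Fin m, G = {x ∈ D.adj s | D.dF i x = s}) ∧
    (setDim (D.adj s) = n →
      ∀ {m' : ℕ} (D' : PolyDesc n m'), D'.pts = D.adj s →
        ∀ x ∈ D.adj s,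
          D'.dist x = D.dist x - s ∧
          (x ∈ interior (D.adj s) → ∀ i : Fin m, D.dist x = D.dF i x →
            IsFacetOf {y ∈ D.adj s | D.dF i y = s} (D.adj s) ∧
            D'.dist x = D.dF i x - s)) := by
  constructor
  · intro G hG
    exact facet_struct D hs hG
  · intro hQ m' D' hD' x hx
    have hge : D.dist x - s ≤ D'.dist x := by
      apply D'.le_dist
      intro k
      obtain ⟨k1, v, hv, hne1, hA1, hb1⟩ := D'.exists_shift k
      obtain ⟨j, hAj, hbj⟩ := match_constraint D hs hQ D' hD' k1 hne1
      have h1 : D'.dF k x = D.dF j x - s + v := by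
        have hba : (D'.b k : ℝ) = (D.b j : ℝ) + s - v := by rw [← hbj, hb1]; ring
        have haa : D'.A k = D.A j := by rw [← hA1, hAj]
        rw [PolyDesc.dF, PolyDesc.dF, haa, hba]
        ring
      rw [h1]
      have := D.dist_le x j
      linarith
    obtain ⟨i0', hi0'⟩ := D.exists_dist_eq x
    obtain ⟨i1, v, hv, hne1, hA1, hb1⟩ := D.exists_shift i0'
    have hdFi1 : D.dF i1 x = D.dF i0' x - v := by
      rw [PolyDesc.dF, PolyDesc.dF, hA1, hb1]; ring
    have hvz : v = 0 := by
      have := D.dist_le x i1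
      rw [hdFi1, ← hi0'] at this
      linarith
    have hmin1 : D.dist x = D.dF i1 x := by rw [hdFi1, hvz, ← hi0']; ring
    obtain ⟨k, hkle, _⟩ := main_two D hs hQ D' hD' hx hmin1 hne1
    have hle : D'.dist x ≤ D.dist x - s := le_trans (D'.dist_le x k) hkle
    have hA : D'.dist x = D.dist x - s := le_antisymm hle hge
    refine ⟨hA, ?_⟩
    intro hint i hmini
    have hspos : s < D.dist x := by
      have h1 : x ∈ interior D'.pts := by rw [hD']; exact hint
      have h2 := D'.interior_pos h1
      obtain ⟨k0, hk0⟩ := D'.exists_dist_eq x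
      have h3 : 0 < D'.dist x := by rw [hk0]; exact h2 k0
      rw [hA] at h3
      linarith
    obtain ⟨i2, v2, hv2, hne2, hA2, hb2⟩ := D.exists_shift i
    have hdFi2 : D.dF i2 x = D.dF i x - v2 := by
      rw [PolyDesc.dF, PolyDesc.dF, hA2, hb2]; ring
    have hv2z : v2 = 0 := by
      have := D.dist_le x i2
      rw [hdFi2, ← hmini] at this
      linarith
    have hb2' : D.b i2 = D.b i := by
      have : (D.b i2 : ℝ) = (D.b i : ℝ) := by rw [hb2, hv2z]; ring
      exact_mod_cast this
    have hi2 : i2 = i := D.irredundant (by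
      simp only [Prod.mk.injEq]
      exact ⟨hA2, hb2'⟩)
    rw [hi2] at hne2
    obtain ⟨k2, hk2le, hk2str⟩ := main_two D hs hQ D' hD' hx hmini hne2
    obtain ⟨⟨hAk2, hbk2⟩, z, hzQ, hzs⟩ := hk2str hspos
    have hseteq : {y : Fin n → ℝ | (∀ j', (D'.b j' : ℝ) ≤ ipair (D'.A j') y) ∧
        ipair (D'.A k2) y = (D'.b k2 : ℝ)} = {y ∈ D.adj s | D.dF i y = s} := by
      ext y
      simp only [Set.mem_setOf_eq]
      constructor
      · rintro ⟨h1, h2⟩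
        have hyp : y ∈ D'.pts := h1
        rw [hD'] at hyp
        refine ⟨hyp, ?_⟩
        rw [PolyDesc.dF]
        rw [hAk2, hbk2] at h2
        linarith
      · rintro ⟨h1, h2⟩
        have hyp : y ∈ D'.pts := by rw [hD']; exact h1
        refine ⟨hyp, ?_⟩
        rw [hAk2, hbk2]
        rw [PolyDesc.dF] at h2
        linarith
    constructor
    · refine ⟨?_, ⟨z, hzQ, hzs⟩, ?_⟩
      · have hset2 : {y ∈ D.adj s | D.dF i y = s} =
            {y ∈ D.adj s | ipair (D.A i) y = (D.b i : ℝ) + s} := by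
          ext y
          simp only [Set.mem_setOf_eq, PolyDesc.dF]
          constructor <;> rintro ⟨h1, h2⟩ <;> exact ⟨h1, by linarith⟩
        rw [hset2]
        refine isExposed_inter_hyperplane fun y hy => ?_
        have := D.mem_adj.mp hy i
        rw [PolyDesc.dF] at this
        linarith
      · have hfd := D'.facet_dim k2
        rw [hseteq] at hfd
        rw [hQ]
        exact hfd
    · rw [hA, hmini]


end
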